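/- Let X be a real or complex Banach algebra with identity, let k be a fixed positive integer, and let g_n : X → X (n = 0,1,2,…) satisfy ‖g_n(ξ)‖ ≤ σ‖ξ‖ for all ξ ∈ X and all n, for some real σ > 0. Let b be an invertible element of X with ‖b‖ < 1 and let a_0, …, a_k ∈ X with a_k ≠ 0 satisfy a_0 b^k + a_1 b^{k−1} + ⋯ + a_k = b^{k+1} and Σ_{i=0}^{k−1} ‖b^{i+1} − a_0 b^i − a_1 b^{i−1} − ⋯ − a_i‖ < 1 − σ. Then every solution (x_n)_{n ≥ −k} of the difference equation x_{n+1} = a_0 x_n + a_1 x_{n−1} + ⋯ + a_k x_{n−k} + g_n(x_n − b x_{n−1}) converges to zero. -/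

import Mathlib

open Filter

lemma seq_aux_gasc2 {β : ℝ} (hβ0 : 0 ≤ β) (hβ1 : β < 1) (u e : ℕ → ℝ)
    (hu : ∀ n, 0 ≤ u n) (hrec : ∀ n, u (n + 1) ≤ β * u n + e n)
    (he : Tendsto e atTop (nhds 0)) : Tendsto u atTop (nhds 0) := by
  rw [Metric.tendsto_atTop]
  intro ε hε
  have h1β : 0 < 1 - β := by linarith
  have hδ : 0 < ε * (1 - β) / 3 := by positivity
  set δ := ε * (1 - β) / 3 with hδdef
  obtain ⟨N, hN⟩ := (Metric.tendsto_atTop.1 he) δ hδ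
  have hde : ∀ m, N ≤ m → e m ≤ δ := by
    intro m hm
    have h := hN m hm
    rw [Real.dist_eq, sub_zero] at h
    exact (lt_of_abs_lt h).le
  have hδ3 : δ / (1 - β) = ε / 3 := by
    field_simp [hδdef]
    ring
  have key : ∀ n, u (N + n) ≤ β ^ n * u N + ε / 3 := by
    intro n
    induction n with
    | zero => simp; positivity
    | succ n ih =>
      have h2 := hrec (N + n)
      have h3 := hde (N + n) (Nat.le_add_right _ _)
      have h4 : β * u (N + n) ≤ β * (β ^ n * u N + ε / 3) :=
        mul_le_mul_of_nonneg_left ih hβ0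
      have h5 : N + (n + 1) = (N + n) + 1 := by ring
      rw [h5]
      have hβε : β * (ε / 3) + δ ≤ ε / 3 := le_of_eq (by rw [hδdef]; ring)
      calc u ((N + n) + 1) ≤ β * u (N + n) + e (N + n) := h2
        _ ≤ β * (β ^ n * u N + ε / 3) + δ := by linarith
        _ = β ^ (n + 1) * u N + (β * (ε / 3) + δ) := by ring
        _ ≤ β ^ (n + 1) * u N + ε / 3 := by linarith
  have hpow : Tendsto (fun n : ℕ => β ^ n * u N) atTop (nhds 0) := by
    have := tendsto_pow_atTop_nhds_zero_of_lt_one hβ0 hβ1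
    simpa using this.mul_const (u N)
  obtain ⟨n0, hn0⟩ := (Metric.tendsto_atTop.1 hpow) (ε / 3) (by positivity)
  refine ⟨N + n0, fun m hm => ?_⟩
  have hm1 : m = N + (m - N) := by omega
  have hmn : n0 ≤ m - N := by omega
  have h6 := key (m - N)
  have h7 := hn0 (m - N) hmn
  rw [Real.dist_eq, sub_zero] at h7
  have h8 : β ^ (m - N) * u N < ε / 3 := lt_of_abs_lt h7
  rw [Real.dist_eq, sub_zero, abs_of_nonneg (hu m)]
  rw [hm1]
  calc u (N + (m - N)) ≤ β ^ (m - N) * u N + ε / 3 := h6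
    _ < ε / 3 + ε / 3 := by linarith
    _ < ε := by linarith

theorem global_attractivity_single_linear_argument
    {𝕜 X : Type*} [RCLike 𝕜] [NormedRing X] [NormOneClass X]
    [NormedAlgebra 𝕜 X] [CompleteSpace X]
    (k : ℕ) (hk : 0 < k)
    (g : ℕ → X → X) (σ : ℝ) (hσ : 0 < σ)
    (hg : ∀ (n : ℕ) (ξ : X), ‖g n ξ‖ ≤ σ * ‖ξ‖)
    (b : X) (hb : IsUnit b) (hb1 : ‖b‖ < 1)
    (a : ℕ → X) (hak : a k ≠ 0)
    (hroot : ∑ i ∈ Finset.range (k + 1), a i * b ^ (k - i) = b ^ (k + 1))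
    (hsum : ∑ i ∈ Finset.range k,
      ‖b ^ (i + 1) - ∑ j ∈ Finset.range (i + 1), a j * b ^ (i - j)‖ < 1 - σ)
    (x : ℤ → X)
    (hx : ∀ n : ℤ, 0 ≤ n → x (n + 1) =
      ∑ i ∈ Finset.range (k + 1), a i * x (n - (i : ℤ)) +
        g n.toNat (x n - b * x (n - 1))) :
    Filter.Tendsto (fun n : ℕ => x (n : ℤ)) Filter.atTop (nhds 0) := by
  classical
  have hkne : (Finset.range k).Nonempty := Finset.nonempty_range_iff.mpr hk.ne'
  set c : ℕ → X := fun i => b ^ (i + 1) - ∑ j ∈ Finset.range (i + 1), a j * b ^ (i - j)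
    with hc
  have hck : c k = 0 := by
    simp only [hc]
    rw [hroot, sub_self]
  have ha0 : a 0 = b - c 0 := by
    simp [hc]
  have haS : ∀ i : ℕ, a (i + 1) = c i * b - c (i + 1) := by
    intro i
    have h1 : (∑ j ∈ Finset.range (i + 1), a j * b ^ (i - j)) * b
        = ∑ j ∈ Finset.range (i + 1), a j * b ^ (i + 1 - j) := by
      rw [Finset.sum_mul]
      refine Finset.sum_congr rfl fun j hj => ?_
      rw [Finset.mem_range] at hj
      rw [mul_assoc, ← pow_succ]
      congr 2
      omega
    simp only [hc]
    rw [sub_mul, h1, Finset.sum_range_succ (fun j => a j * b ^ (i + 1 - j)) (i + 1)]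
    simp only [Nat.sub_self, pow_zero, mul_one, ← pow_succ]
    abel
  -- key summation identity
  have key : ∀ u : ℕ → X, ∑ i ∈ Finset.range (k + 1), a i * u i
      = b * u 0 - ∑ i ∈ Finset.range k, c i * (u i - b * u (i + 1)) := by
    intro u
    have e1 : ∑ i ∈ Finset.range k, c i * (u i - b * u (i + 1))
        = (∑ i ∈ Finset.range k, c i * u i)
          - ∑ i ∈ Finset.range k, c i * (b * u (i + 1)) := by
      rw [← Finset.sum_sub_distrib]
      exact Finset.sum_congr rfl fun i _ => mul_sub _ _ _
    have e2 : ∑ i ∈ Finset.range (k + 1), a i * u i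
        = (∑ i ∈ Finset.range k, (c i * b - c (i + 1)) * u (i + 1)) + a 0 * u 0 := by
      rw [Finset.sum_range_succ']
      congr 1
      exact Finset.sum_congr rfl fun i _ => by rw [haS]
    have e3 : ∑ i ∈ Finset.range k, (c i * b - c (i + 1)) * u (i + 1)
        = (∑ i ∈ Finset.range k, c i * (b * u (i + 1)))
          - ∑ i ∈ Finset.range k, c (i + 1) * u (i + 1) := by
      rw [← Finset.sum_sub_distrib]
      exact Finset.sum_congr rfl fun i _ => by rw [sub_mul, mul_assoc]
    have e4 : (∑ i ∈ Finset.range k, c i * u i)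
          - (∑ i ∈ Finset.range k, c (i + 1) * u (i + 1)) = c 0 * u 0 := by
      rw [← Finset.sum_sub_distrib, Finset.sum_range_sub' (fun i => c i * u i) k, hck,
        zero_mul, sub_zero]
    have e5 : ∑ i ∈ Finset.range k, c (i + 1) * u (i + 1)
        = (∑ i ∈ Finset.range k, c i * u i) - c 0 * u 0 := by
      rw [← e4]; abel
    have ha0u : a 0 * u 0 = b * u 0 - c 0 * u 0 := by rw [ha0]; exact sub_mul b (c 0) (u 0)
    rw [e2, e3, e1, e5, ha0u]
    abel
  set Y : ℤ → X := fun m => x m - b * x (m - 1) with hYdef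
  have hrecY : ∀ n : ℕ, Y ((n : ℤ) + 1)
      = -(∑ i ∈ Finset.range k, c i * Y ((n : ℤ) - i)) + g n (Y n) := by
    intro n
    have hxn := hx n (Int.natCast_nonneg n)
    have hu := key (fun i => x ((n : ℤ) - i))
    have hY1 : Y ((n : ℤ) + 1) = x ((n : ℤ) + 1) - b * x n := by
      simp [hYdef]
    rw [hY1, hxn, hu]
    simp only [Int.toNat_natCast, hYdef, Nat.cast_zero, sub_zero, Nat.cast_add,
      Nat.cast_one, sub_add_eq_sub_sub]
    abel
  -- norm estimates
  set C : ℝ := ∑ i ∈ Finset.range k, ‖c i‖ with hCdef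
  set θ : ℝ := C + σ with hθdef
  have hC0 : 0 ≤ C := Finset.sum_nonneg fun i _ => norm_nonneg _
  have hθ0 : 0 ≤ θ := add_nonneg hC0 hσ.le
  have hθ1 : θ < 1 := by
    have : C < 1 - σ := by simpa [hCdef, hc] using hsum
    simp only [hθdef]; linarith
  set M : ℕ → ℝ := fun n => (Finset.range k).sup' hkne (fun i => ‖Y ((n : ℤ) - i)‖)
    with hMdef
  have hYleM : ∀ (n : ℕ) (i : ℕ), i < k → ‖Y ((n : ℤ) - i)‖ ≤ M n := by
    intro n i hi
    exact Finset.le_sup' (fun i : ℕ => ‖Y ((n : ℤ) - i)‖) (Finset.mem_range.mpr hi)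
  have hM0 : ∀ n, 0 ≤ M n := fun n =>
    le_trans (norm_nonneg _) (hYleM n 0 hk)
  have hstep : ∀ n : ℕ, ‖Y ((n : ℤ) + 1)‖ ≤ θ * M n := by
    intro n
    rw [hrecY n]
    calc ‖-(∑ i ∈ Finset.range k, c i * Y ((n : ℤ) - i)) + g n (Y n)‖
        ≤ ‖-(∑ i ∈ Finset.range k, c i * Y ((n : ℤ) - i))‖ + ‖g n (Y n)‖ :=
          norm_add_le _ _
      _ ≤ (∑ i ∈ Finset.range k, ‖c i‖ * M n) + σ * M n := by
          rw [norm_neg]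
          gcongr
          · exact (norm_sum_le _ _).trans (Finset.sum_le_sum fun i hi => by
              calc ‖c i * Y ((n : ℤ) - i)‖ ≤ ‖c i‖ * ‖Y ((n : ℤ) - i)‖ := norm_mul_le _ _
                _ ≤ ‖c i‖ * M n := by
                    have := hYleM n i (Finset.mem_range.mp hi)
                    exact mul_le_mul_of_nonneg_left this (norm_nonneg _))
          · calc ‖g n (Y n)‖ ≤ σ * ‖Y ((n : ℤ))‖ := hg n _
              _ ≤ σ * M n := by
                  have := hYleM n 0 hk
                  simp only [Nat.cast_zero, sub_zero] at this
                  exact mul_le_mul_of_nonneg_left this hσ.le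
      _ = θ * M n := by rw [← Finset.sum_mul, ← hCdef, hθdef, add_mul]
  have hMstep : ∀ n, M (n + 1) ≤ M n := by
    intro n
    apply Finset.sup'_le
    intro i hi
    rw [Finset.mem_range] at hi
    rcases Nat.eq_zero_or_pos i with h0 | hpos
    · subst h0
      have h1 : ((n + 1 : ℕ) : ℤ) - (0 : ℕ) = (n : ℤ) + 1 := by push_cast; ring
      rw [h1]
      calc ‖Y ((n : ℤ) + 1)‖ ≤ θ * M n := hstep n
        _ ≤ 1 * M n := mul_le_mul_of_nonneg_right hθ1.le (hM0 n)
        _ = M n := one_mul _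
    · have h1 : ((n + 1 : ℕ) : ℤ) - (i : ℕ) = (n : ℤ) - ((i - 1 : ℕ) : ℤ) := by omega
      rw [h1]
      exact hYleM n (i - 1) (by omega)
  have hManti : Antitone M := antitone_nat_of_succ_le hMstep
  have hMk : ∀ n, M (n + k) ≤ θ * M n := by
    intro n
    apply Finset.sup'_le
    intro i hi
    rw [Finset.mem_range] at hi
    have h1 : ((n + k : ℕ) : ℤ) - (i : ℕ) = ((n + (k - 1 - i) : ℕ) : ℤ) + 1 := by omega
    rw [h1]
    calc ‖Y (((n + (k - 1 - i) : ℕ) : ℤ) + 1)‖ ≤ θ * M (n + (k - 1 - i)) := hstep _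
      _ ≤ θ * M n := mul_le_mul_of_nonneg_left (hManti (Nat.le_add_right _ _)) hθ0
  have hbdd : BddBelow (Set.range M) := ⟨0, by rintro r ⟨n, rfl⟩; exact hM0 n⟩
  have hML : Tendsto M atTop (nhds (⨅ n, M n)) := tendsto_atTop_ciInf hManti hbdd
  have hL0 : 0 ≤ ⨅ n, M n := le_ciInf hM0
  have hLθ : (⨅ n, M n) ≤ θ * ⨅ n, M n := by
    have h1 : Tendsto (fun n => θ * M n) atTop (nhds (θ * ⨅ n, M n)) := hML.const_mul θ
    refine ge_of_tendsto h1 ?_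
    filter_upwards with n
    exact le_trans (ciInf_le hbdd (n + k)) (hMk n)
  have hLz : (⨅ n, M n) = 0 := by nlinarith
  rw [hLz] at hML
  -- Y tends to zero
  have hYnorm : Tendsto (fun n : ℕ => ‖Y ((n : ℤ) + 1)‖) atTop (nhds 0) := by
    apply squeeze_zero (fun n => norm_nonneg _) (fun n => hstep n)
    simpa using hML.const_mul θ
  -- x tends to zero
  have hxb : ∀ n : ℕ, ‖x (((n : ℕ) + 1 : ℕ) : ℤ)‖ ≤ ‖b‖ * ‖x (n : ℤ)‖ + ‖Y ((n : ℤ) + 1)‖ := by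
    intro n
    have h1 : x (((n + 1 : ℕ)) : ℤ) = b * x (n : ℤ) + Y ((n : ℤ) + 1) := by
      simp [hYdef]
    rw [h1]
    exact (norm_add_le _ _).trans (by gcongr; exact norm_mul_le _ _)
  have hxt : Tendsto (fun n : ℕ => ‖x ((n : ℤ))‖) atTop (nhds 0) :=
    seq_aux_gasc2 (norm_nonneg b) hb1 _ _ (fun n => norm_nonneg _) hxb hYnorm
  exact tendsto_zero_iff_norm_tendsto_zero.mpr hxt
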